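/- The space L(c₀, c₀) of bounded linear operators from c₀ to itself (with the operator norm) is octahedral. -/

import Mathlib

set_option maxHeartbeats 1000000


open scoped ZeroAtInfty

open Filter ZeroAtInftyContinuousMap

/-- Finitely supported element of `c₀`. -/
noncomputable def fsupp (c : ℕ → ℝ) (s : Finset ℕ) : C₀(ℕ, ℝ) :=
  ⟨⟨fun k => if k ∈ s then c k else 0, continuous_of_discreteTopology⟩, by
    rw [cocompact_eq_cofinite]
    refine Tendsto.congr' ?_ tendsto_const_nhds
    have h : ∀ᶠ k in (cofinite : Filter ℕ), k ∉ s :=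
      s.finite_toSet.eventually_cofinite_notMem
    exact h.mono fun k hk => (if_neg hk).symm⟩

@[simp] lemma fsupp_apply (c : ℕ → ℝ) (s : Finset ℕ) (k : ℕ) :
    fsupp c s k = if k ∈ s then c k else 0 := rfl

/-- Standard basis vectors of `c₀`. -/
noncomputable def eb (M : ℕ) : C₀(ℕ, ℝ) := fsupp (fun _ => 1) {M}

@[simp] lemma eb_apply (M k : ℕ) : eb M k = if k = M then 1 else 0 := by
  simp [eb]

lemma c0_norm_le (f : C₀(ℕ, ℝ)) {C : ℝ} (h0 : 0 ≤ C) (h : ∀ k, |f k| ≤ C) : ‖f‖ ≤ C := by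
  rw [← norm_toBCF_eq_norm]
  exact (BoundedContinuousFunction.norm_le h0).2 fun k => by
    simpa [Real.norm_eq_abs] using h k

lemma c0_abs_le_norm (f : C₀(ℕ, ℝ)) (k : ℕ) : |f k| ≤ ‖f‖ := by
  rw [← norm_toBCF_eq_norm]
  simpa [Real.norm_eq_abs] using f.toBCF.norm_coe_le_norm k

lemma eb_norm (M : ℕ) : ‖eb M‖ = 1 := by
  refine le_antisymm (c0_norm_le _ zero_le_one fun k => ?_) ?_
  · rcases eq_or_ne k M with h | h <;> simp [h]
  · have := c0_abs_le_norm (eb M) M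
    simpa using this

/-- Evaluation at a coordinate as a continuous linear map. -/
noncomputable def ev (k : ℕ) : C₀(ℕ, ℝ) →L[ℝ] ℝ :=
  LinearMap.mkContinuous
    { toFun := fun f => f k
      map_add' := fun f g => by simp
      map_smul' := fun c f => by simp }
    1 (fun f => by simpa [Real.norm_eq_abs] using c0_abs_le_norm f k)

@[simp] lemma ev_apply (k : ℕ) (f : C₀(ℕ, ℝ)) : ev k f = f k := rfl

lemma fsupp_insert (c : ℕ → ℝ) (s : Finset ℕ) (a : ℕ) (ha : a ∉ s) :
    fsupp c (insert a s) = c a • eb a + fsupp c s := by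
  ext k
  rcases eq_or_ne k a with h | h
  · subst h
    simp [ha, ZeroAtInftyContinuousMap.add_apply]
  · simp [h, ZeroAtInftyContinuousMap.add_apply, Finset.mem_insert]

lemma ell1_bound (f : C₀(ℕ, ℝ) →L[ℝ] ℝ) (F : Finset ℕ) :
    ∑ M ∈ F, |f (eb M)| ≤ ‖f‖ := by
  classical
  set c : ℕ → ℝ := fun M => if f (eb M) < 0 then -1 else 1 with hc
  have hcf : ∀ M, c M * f (eb M) = |f (eb M)| := by
    intro M
    by_cases h : f (eb M) < 0
    · simp [hc, h, abs_of_neg h]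
    · simp [hc, h, abs_of_nonneg (not_lt.mp h)]
  have hx : ∀ G : Finset ℕ, f (fsupp c G) = ∑ M ∈ G, c M * f (eb M) := by
    intro G
    induction G using Finset.induction with
    | empty =>
      have : fsupp c ∅ = 0 := by ext k; simp
      simp [this]
    | @insert a G ha ih =>
      rw [fsupp_insert c G a ha, map_add, map_smul, Finset.sum_insert ha, ih]
      simp
  have hnorm : ‖fsupp c F‖ ≤ 1 := by
    refine c0_norm_le _ zero_le_one fun k => ?_
    by_cases hk : k ∈ F
    · by_cases h : f (eb k) < 0 <;> simp [hc, hk, h]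
    · simp [hk]
  calc ∑ M ∈ F, |f (eb M)| = f (fsupp c F) := by rw [hx]; exact (Finset.sum_congr rfl
        fun M _ => (hcf M).symm)
    _ ≤ |f (fsupp c F)| := le_abs_self _
    _ ≤ ‖f‖ * ‖fsupp c F‖ := by simpa [Real.norm_eq_abs] using f.le_opNorm (fsupp c F)
    _ ≤ ‖f‖ * 1 := by
        exact mul_le_mul_of_nonneg_left hnorm (norm_nonneg f)
    _ = ‖f‖ := mul_one _

lemma finite_bad (f : C₀(ℕ, ℝ) →L[ℝ] ℝ) {δ : ℝ} (hδ : 0 < δ) :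
    {M : ℕ | δ ≤ |f (eb M)|}.Finite := by
  by_contra h
  have hinf : {M : ℕ | δ ≤ |f (eb M)|}.Infinite := h
  obtain ⟨F, hFsub, hFcard⟩ := hinf.exists_subset_card_eq (⌈‖f‖ / δ⌉₊ + 1)
  have h1 : (F.card : ℝ) * δ ≤ ∑ M ∈ F, |f (eb M)| := by
    have := Finset.card_nsmul_le_sum F (fun M => |f (eb M)|) δ
      (fun M hM => hFsub hM)
    simpa [nsmul_eq_mul] using this
  have h2 : ‖f‖ / δ < (F.card : ℝ) := by
    rw [hFcard]
    push_cast
    calc ‖f‖ / δ ≤ (⌈‖f‖ / δ⌉₊ : ℝ) := Nat.le_ceil _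
      _ < (⌈‖f‖ / δ⌉₊ : ℝ) + 1 := by linarith
  have h3 : ‖f‖ < (F.card : ℝ) * δ := (div_lt_iff₀ hδ).mp h2
  linarith [ell1_bound f F]

/-- A Banach space `Z` is octahedral. -/
def Octahedral (Z : Type*) [NormedAddCommGroup Z] : Prop :=
  ∀ (n : ℕ) (x : Fin n → Z), (∀ i, ‖x i‖ = 1) →
    ∀ ε > (0 : ℝ), ∃ y : Z, ‖y‖ = 1 ∧ ∀ i, 2 - ε ≤ ‖x i + y‖

/-- The space of bounded linear operators from `c₀` to `c₀` is octahedral. -/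
theorem octahedral_L_c0_c0 : Octahedral (C₀(ℕ, ℝ) →L[ℝ] C₀(ℕ, ℝ)) := by
  intro n T hT ε hε
  classical
  set δ : ℝ := min (ε / 8) (1 / 2) with hδdef
  have hδ0 : 0 < δ := lt_min (by linarith) one_half_pos
  have hδε : δ ≤ ε / 8 := min_le_left _ _
  have hδhalf : δ ≤ 1 / 2 := min_le_right _ _
  -- choose almost-norming vectors
  have hTn : ∀ i, (1 : ℝ) - δ < ‖T i‖ := fun i => by rw [hT i]; linarith
  choose u hu1 hu2 using fun i => (T i).exists_lt_apply_of_lt_opNorm (hTn i)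
  -- choose peak coordinates
  have hkex : ∀ i, ∃ k, 1 - δ < |(T i (u i)) k| := by
    intro i
    by_contra h
    push_neg at h
    have := c0_norm_le (T i (u i)) (by linarith) h
    linarith [hu2 i]
  choose k hk using hkex
  -- support of w
  set s : Finset ℕ := insert 0 (Finset.image k Finset.univ) with hs
  set w : C₀(ℕ, ℝ) := fsupp (fun _ => 1) s with hwdef
  have hwk : ∀ i, w (k i) = 1 := by
    intro i
    have : k i ∈ s := by
      rw [hs]
      exact Finset.mem_insert_of_mem (Finset.mem_image_of_mem k (Finset.mem_univ i))
    simp [hwdef, this]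
  have hw0 : w 0 = 1 := by
    have : (0 : ℕ) ∈ s := Finset.mem_insert_self 0 _
    simp [hwdef, this]
  have hwnorm : ‖w‖ = 1 := by
    refine le_antisymm (c0_norm_le _ zero_le_one fun j => ?_) ?_
    · by_cases hj : j ∈ s <;> simp [hwdef, hj]
    · have := c0_abs_le_norm w 0
      rw [hw0] at this
      simpa using this
  -- choose the coordinate M far out
  have hev : ∀ i, ∀ᶠ M in atTop, |(T i (eb M)) (k i)| < δ := by
    intro i
    have hfin := finite_bad ((ev (k i)).comp (T i)) hδ0
    rw [← Nat.cofinite_eq_atTop, eventually_cofinite]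
    simpa [not_lt] using hfin
  have huev : ∀ i, ∀ᶠ M in atTop, |(u i) M| < δ := by
    intro i
    have h0 := (u i).zero_at_infty'
    rw [cocompact_eq_cofinite, Nat.cofinite_eq_atTop] at h0
    have := Metric.tendsto_nhds.mp h0 δ hδ0
    simpa [Real.dist_eq] using this
  obtain ⟨M, hM1, hM2⟩ := ((eventually_all.2 hev).and (eventually_all.2 huev)).exists
  -- the operator S
  set S : C₀(ℕ, ℝ) →L[ℝ] C₀(ℕ, ℝ) := (ev M).smulRight w with hSdef
  have hSapp : ∀ f : C₀(ℕ, ℝ), S f = f M • w := fun f => rfl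
  have hSnorm : ‖S‖ = 1 := by
    refine le_antisymm (ContinuousLinearMap.opNorm_le_bound _ zero_le_one fun f => ?_) ?_
    · rw [hSapp, one_mul]
      refine c0_norm_le _ (norm_nonneg f) fun j => ?_
      have hj : (f M • w) j = f M * w j := rfl
      rw [hj, abs_mul]
      have h1 : |f M| ≤ ‖f‖ := c0_abs_le_norm f M
      have h2 : |w j| ≤ 1 := by
        by_cases hjs : j ∈ s <;> simp [hwdef, hjs]
      have h3 : (0:ℝ) ≤ |f M| := abs_nonneg _
      nlinarith
    · have h1 : S (eb M) = w := by
        rw [hSapp]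
        simp
      have := S.le_opNorm (eb M)
      rw [h1, hwnorm, eb_norm, mul_one] at this
      exact this
  refine ⟨S, hSnorm, fun i => ?_⟩
  -- test vector
  set σ : ℝ := if (T i (u i)) (k i) < 0 then -1 else 1 with hσdef
  have hσabs : |σ| = 1 := by
    by_cases h : (T i (u i)) (k i) < 0 <;> simp [hσdef, h]
  have hσval : 1 - δ < σ * (T i (u i)) (k i) := by
    by_cases h : (T i (u i)) (k i) < 0
    · have := hk i
      rw [abs_of_neg h] at this
      simp only [hσdef, if_pos h]
      linarith
    · have := hk i
      rw [abs_of_nonneg (not_lt.mp h)] at this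
      simp only [hσdef, if_neg h]
      linarith
  set x : C₀(ℕ, ℝ) := σ • u i + eb M with hxdef
  have hxM : x M = σ * (u i) M + 1 := by
    simp [hxdef, ZeroAtInftyContinuousMap.add_apply]
  have hxnorm : ‖x‖ ≤ 1 + δ := by
    refine c0_norm_le _ (by linarith) fun j => ?_
    have hxj : x j = σ * (u i) j + eb M j := by
      simp [hxdef, ZeroAtInftyContinuousMap.add_apply]
    rcases eq_or_ne j M with hj | hj
    · have h1 : |σ * (u i) j| ≤ δ := by
        rw [hj, abs_mul, hσabs, one_mul]
        exact (hM2 i).le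
      have h2 : eb M j = 1 := by simp [hj]
      rw [hxj, h2]
      calc |σ * (u i) j + 1| ≤ |σ * (u i) j| + |(1:ℝ)| := abs_add_le _ _
        _ ≤ δ + 1 := by
            refine add_le_add h1 ?_
            simp
        _ = 1 + δ := by ring
    · rw [hxj]
      have h1 : |(u i) j| ≤ ‖u i‖ := c0_abs_le_norm (u i) j
      have h2 : eb M j = 0 := by simp [hj]
      rw [h2, add_zero, abs_mul, hσabs, one_mul]
      have := hu1 i
      linarith
  -- the key coordinate estimate
  have hcoord : ((T i + S) x) (k i)
      = σ * (T i (u i)) (k i) + (T i (eb M)) (k i) + (σ * (u i) M + 1) := by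
    have h1 : (T i + S) x = σ • (T i (u i)) + T i (eb M) + (x M) • w := by
      rw [ContinuousLinearMap.add_apply, hSapp, hxdef, map_add, map_smul]
    rw [h1]
    have h2 : x M = σ * (u i) M + 1 := hxM
    simp only [ZeroAtInftyContinuousMap.add_apply]
    rw [h2]
    have : ((σ * (u i) M + 1) • w) (k i) = (σ * (u i) M + 1) * w (k i) := rfl
    rw [this, hwk i]
    have : (σ • (T i) (u i)) (k i) = σ * ((T i) (u i)) (k i) := rfl
    rw [this]
    ring
  have hbig : 2 - 3 * δ ≤ |((T i + S) x) (k i)| := by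
    rw [hcoord]
    have h1 : |(T i (eb M)) (k i)| < δ := by
      have := hM1 i
      simpa using this
    have h2 : |σ * (u i) M| ≤ δ := by
      rw [abs_mul, hσabs, one_mul]
      exact (hM2 i).le
    have h3 := hσval
    have h4 : -δ ≤ σ * (u i) M := neg_le_of_abs_le h2
    have h5 : -δ < (T i (eb M)) (k i) := neg_lt_of_abs_lt h1
    have : 2 - 3 * δ ≤ σ * (T i (u i)) (k i) + (T i (eb M)) (k i) + (σ * (u i) M + 1) := by
      linarith
    exact this.trans (le_abs_self _)
  -- conclude
  have hstep : 2 - 3 * δ ≤ ‖T i + S‖ * (1 + δ) := by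
    calc 2 - 3 * δ ≤ |((T i + S) x) (k i)| := hbig
      _ ≤ ‖(T i + S) x‖ := c0_abs_le_norm _ _
      _ ≤ ‖T i + S‖ * ‖x‖ := (T i + S).le_opNorm x
      _ ≤ ‖T i + S‖ * (1 + δ) :=
          mul_le_mul_of_nonneg_left hxnorm (norm_nonneg (T i + S))
  have harith : (2 - ε) * (1 + δ) ≤ 2 - 3 * δ := by nlinarith
  have : (2 - ε) * (1 + δ) ≤ ‖T i + S‖ * (1 + δ) := harith.trans hstep
  exact le_of_mul_le_mul_right this (by linarith)
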